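/- Let μ be a k-AD-regular measure on ℝⁿ with regularity constant D, let x ∈ supp μ, r > 0, and let E₁, E₂ ⊆ ℝⁿ be Borel sets. Let λ, η ∈ (0,1) with 4η < λ, and set M := ⌈ log((1−2η)/(1−λ/2)) / log(1/(1−η)) ⌉. Then there exists a radius s with (1−λ/2)r ≤ s ≤ (1−2η)r such that all three of the following hold: μ(B(x, s/(1−η)) \ B(x,s)) ≤ (3/M) μ(B(x,(1−η)r) \ B(x,(1−λ)r)); μ(E₁ ∩ (B(x, s/(1−η)) \ B(x,s))) ≤ (3/M) μ(E₁ ∩ (B(x,(1−η)r) \ B(x,(1−λ)r))); and the same inequality with E₂ in place of E₁. Moreover λ/(2η) − 2 ≤ M ≤ λ/η + 1. -/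

import Mathlib

open MeasureTheory Metric
open scoped ENNReal

/-- The support of a measure: points whose every neighborhood has positive measure. -/
def msupport {E : Type*} [MeasurableSpace E] [PseudoMetricSpace E] (μ : Measure E) : Set E :=
  {x | ∀ ε : ℝ, 0 < ε → 0 < μ (ball x ε)}

/-- `μ` is `k`-AD-regular with constant `D`. -/
def IsADRegular {n : ℕ} (μ : Measure (EuclideanSpace ℝ (Fin n))) (k : ℕ) (D : ℝ) : Prop :=
  ∀ x ∈ msupport μ, ∀ r : ℝ, 0 < r → ENNReal.ofReal r < EMetric.diam (msupport μ) →
    ENNReal.ofReal (D⁻¹ * r ^ k) ≤ μ (closedBall x r) ∧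
      μ (closedBall x r) ≤ ENNReal.ofReal (D * r ^ k)

lemma aux_card14 {X : Type*} [MeasurableSpace X] (ν : Measure X) (A : ℕ → Set X)
    (Abig : Set X) (M : ℕ) (hM0 : 0 < M) (F : Finset ℕ)
    (hmeas : ∀ j ∈ F, MeasurableSet (A j))
    (hsub : ∀ j ∈ F, A j ⊆ Abig)
    (hdisj : (↑F : Set ℕ).PairwiseDisjoint A)
    (hbig : ∀ j ∈ F, (3 / (M : ℝ≥0∞)) * ν Abig < ν (A j)) :
    3 * F.card < M := by
  rcases F.eq_empty_or_nonempty with hFe | hFne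
  · simpa [hFe] using hM0
  obtain ⟨j₀, hj₀⟩ := hFne
  have hje : ∀ j ∈ F, ν (A j) ≤ ν Abig := fun j hj => measure_mono (hsub j hj)
  have hc0 : (3 / (M : ℝ≥0∞)) ≠ 0 := by
    simp [ENNReal.div_eq_zero_iff]
  have hT0 : ν Abig ≠ 0 := by
    intro h
    have h1 := hbig j₀ hj₀
    rw [h, mul_zero] at h1
    have h2 := hje j₀ hj₀
    rw [h] at h2
    exact absurd h2 (not_le.mpr h1)
  have hTtop : ν Abig ≠ ⊤ := by
    intro h
    have h1 := hbig j₀ hj₀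
    rw [h, ENNReal.mul_top hc0] at h1
    exact not_top_lt h1
  have htpos : 0 < (ν Abig).toReal := ENNReal.toReal_pos hT0 hTtop
  have hMr : (0:ℝ) < M := Nat.cast_pos.mpr hM0
  have hfin : ∀ j ∈ F, ν (A j) ≠ ⊤ :=
    fun j hj => ((hje j hj).trans_lt (lt_top_iff_ne_top.mpr hTtop)).ne
  have hlt : ∀ j ∈ F, 3 / (M:ℝ) * (ν Abig).toReal < (ν (A j)).toReal := by
    intro j hj
    have h1 := hbig j hj
    have h2 : ((3 / (M : ℝ≥0∞)) * ν Abig).toReal = 3 / (M:ℝ) * (ν Abig).toReal := by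
      rw [ENNReal.toReal_mul, ENNReal.toReal_div]
      simp
    rw [← h2]
    exact (ENNReal.toReal_lt_toReal
      (ENNReal.mul_ne_top (by simp [ENNReal.div_eq_top]; omega) hTtop) (hfin j hj)).mpr h1
  have hsumENN : ∑ j ∈ F, ν (A j) ≤ ν Abig := by
    rw [← measure_biUnion_finset hdisj hmeas]
    exact measure_mono (Set.iUnion₂_subset hsub)
  have hsum : ∑ j ∈ F, (ν (A j)).toReal ≤ (ν Abig).toReal := by
    rw [← ENNReal.toReal_sum hfin]
    exact ENNReal.toReal_mono hTtop hsumENN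
  have hkey : (F.card : ℝ) * (3 / (M:ℝ) * (ν Abig).toReal) < (ν Abig).toReal := by
    calc (F.card : ℝ) * (3/(M:ℝ) * (ν Abig).toReal)
        = ∑ _j ∈ F, 3/(M:ℝ) * (ν Abig).toReal := by rw [Finset.sum_const, nsmul_eq_mul]
      _ < ∑ j ∈ F, (ν (A j)).toReal := Finset.sum_lt_sum_of_nonempty ⟨j₀, hj₀⟩ hlt
      _ ≤ (ν Abig).toReal := hsum
  have hkey' : (F.card:ℝ) * 3 * (ν Abig).toReal < M * (ν Abig).toReal := by
    have h := mul_lt_mul_of_pos_left hkey hMr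
    calc (F.card:ℝ) * 3 * (ν Abig).toReal
        = (M:ℝ) * ((F.card:ℝ) * (3/(M:ℝ) * (ν Abig).toReal)) := by
          field_simp
      _ < (M:ℝ) * (ν Abig).toReal := h
  have h3 : (3 * F.card : ℝ) < M := by
    have := lt_of_mul_lt_mul_right (by linarith [hkey'] : (3 * (F.card:ℝ)) * (ν Abig).toReal < (M:ℝ) * (ν Abig).toReal) htpos.le
    linarith
  exact_mod_cast h3

set_option maxHeartbeats 1000000 in
/-- Choice of a good annulus: with `M = ⌈log((1−2η)/(1−λ/2))/log(1/(1−η))⌉`, there is a radius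
`(1−λ/2)r ≤ s ≤ (1−2η)r` such that the annulus `B(x,s/(1−η)) \ B(x,s)` carries at most a
`3/M`-fraction of the mass of `B(x,(1−η)r) \ B(x,(1−λ)r)`, for `μ` itself and for its
restrictions to `E₁` and `E₂`; moreover `λ/(2η) − 2 ≤ M ≤ λ/η + 1`. -/
theorem stmt14 {n k : ℕ} (μ : Measure (EuclideanSpace ℝ (Fin n))) (D : ℝ)
    (hD : 0 < D) (hreg : IsADRegular μ k D)
    (x : EuclideanSpace ℝ (Fin n)) (hx : x ∈ msupport μ) (r : ℝ) (hr : 0 < r)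
    (E₁ E₂ : Set (EuclideanSpace ℝ (Fin n))) (hE₁ : MeasurableSet E₁) (hE₂ : MeasurableSet E₂)
    (lam η : ℝ) (hlam : lam ∈ Set.Ioo (0 : ℝ) 1) (hη : η ∈ Set.Ioo (0 : ℝ) 1)
    (hle : 4 * η < lam)
    (M : ℕ) (hM : M = ⌈Real.log ((1 - 2 * η) / (1 - lam / 2)) / Real.log (1 / (1 - η))⌉₊) :
    (lam / (2 * η) - 2 ≤ (M : ℝ) ∧ (M : ℝ) ≤ lam / η + 1) ∧
    ∃ s : ℝ, (1 - lam / 2) * r ≤ s ∧ s ≤ (1 - 2 * η) * r ∧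
      μ (closedBall x (s / (1 - η)) \ closedBall x s) ≤
        (3 / (M : ℝ≥0∞)) * μ (closedBall x ((1 - η) * r) \ closedBall x ((1 - lam) * r)) ∧
      μ (E₁ ∩ (closedBall x (s / (1 - η)) \ closedBall x s)) ≤
        (3 / (M : ℝ≥0∞)) *
          μ (E₁ ∩ (closedBall x ((1 - η) * r) \ closedBall x ((1 - lam) * r))) ∧
      μ (E₂ ∩ (closedBall x (s / (1 - η)) \ closedBall x s)) ≤
        (3 / (M : ℝ≥0∞)) *
          μ (E₂ ∩ (closedBall x ((1 - η) * r) \ closedBall x ((1 - lam) * r))) := by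
  classical
  obtain ⟨hlam0, hlam1⟩ := hlam
  obtain ⟨hη0, hη1⟩ := hη
  have h1η : (0:ℝ) < 1 - η := by linarith
  have h12η : (0:ℝ) < 1 - 2*η := by linarith
  have h1l2 : (0:ℝ) < 1 - lam/2 := by linarith
  set a : ℝ := (1 - 2*η)/(1 - lam/2) with ha_def
  set c : ℝ := 1/(1-η) with hc_def
  have hapos : 0 < a := div_pos h12η h1l2
  have hcpos : 0 < c := by rw [hc_def]; positivity
  have hb1 : (1:ℝ) < c := by rw [hc_def, lt_div_iff₀ h1η]; linarith
  have ha1 : (1:ℝ) < a := by rw [ha_def, lt_div_iff₀ h1l2]; linarith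
  have hlogc : 0 < Real.log c := Real.log_pos hb1
  have hloga : 0 < Real.log a := Real.log_pos ha1
  set L : ℝ := Real.log a / Real.log c with hL_def
  have hL0 : 0 < L := div_pos hloga hlogc
  -- log bounds
  have hlogc_lb : η ≤ Real.log c := by
    have h := Real.log_le_sub_one_of_pos h1η
    rw [hc_def, one_div, Real.log_inv]
    linarith
  have hlogc_ub : Real.log c * (1-η) ≤ η := by
    have h := Real.log_le_sub_one_of_pos hcpos
    have h2 : (c - 1) * (1-η) = η := by rw [hc_def]; field_simp; ring
    nlinarith
  have hloga_ub : Real.log a ≤ lam := by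
    have h := Real.log_le_sub_one_of_pos hapos
    have h2 : a ≤ lam + 1 := by
      rw [ha_def, div_le_iff₀ h1l2]
      nlinarith
    linarith
  have hloga_lb : lam - 4*η ≤ Real.log a * (2*(1-2*η)) := by
    have h := Real.log_le_sub_one_of_pos (inv_pos.mpr hapos)
    rw [Real.log_inv] at h
    have h2 : (1 - a⁻¹) * (2*(1-2*η)) = lam - 4*η := by
      rw [ha_def, inv_div]
      field_simp
      ring
    nlinarith
  have hLub : L ≤ lam/η := by
    rw [hL_def, div_le_div_iff₀ hlogc hη0]
    nlinarith [mul_nonneg (sub_nonneg.mpr hloga_ub) hη0.le,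
      mul_nonneg hlam0.le (sub_nonneg.mpr hlogc_lb)]
  have hLlb : lam/(2*η) - 2 ≤ L := by
    have heq : lam/(2*η) - 2 = (lam - 4*η)/(2*η) := by field_simp; ring
    rw [heq, hL_def, div_le_div_iff₀ (by positivity) hlogc]
    nlinarith [mul_le_mul_of_nonneg_right hloga_lb hlogc.le,
      mul_le_mul_of_nonneg_left hlogc_ub (by positivity : (0:ℝ) ≤ 2*Real.log a),
      mul_pos (mul_pos hloga hlogc) hη0]
  have hM0 : 0 < M := by rw [hM]; exact Nat.ceil_pos.mpr hL0
  have hMge : L ≤ (M:ℝ) := by rw [hM]; exact Nat.le_ceil L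
  have hMlt : (M:ℝ) < L + 1 := by rw [hM]; exact Nat.ceil_lt_add_one hL0.le
  have hMlb : lam/(2*η) - 2 ≤ (M:ℝ) := hLlb.trans hMge
  have hMub : (M:ℝ) ≤ lam/η + 1 := by linarith
  refine ⟨⟨hMlb, hMub⟩, ?_⟩
  -- geometry
  set g : ℕ → ℝ := fun j => (1 - lam/2) * c^j * r with hg_def
  have hgmono : ∀ {i j : ℕ}, i ≤ j → g i ≤ g j := by
    intro i j hij
    simp only [hg_def]
    exact mul_le_mul_of_nonneg_right
      (mul_le_mul_of_nonneg_left (pow_le_pow_right₀ hb1.le hij) h1l2.le) hr.le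
  have hgstep : ∀ j, g (j+1) = g j * c := by
    intro j; simp only [hg_def, pow_succ]; ring
  have hgdiv : ∀ j, g j / (1-η) = g (j+1) := by
    intro j
    rw [hgstep j, hc_def]
    field_simp
  have hcast : ((M-1:ℕ):ℝ) = (M:ℝ) - 1 := by
    rw [Nat.cast_sub hM0]; simp
  have hlogle : Real.log (c^(M-1)) ≤ Real.log a := by
    rw [Real.log_pow, hcast]
    have h1 : ((M:ℝ)-1) * Real.log c ≤ L * Real.log c :=
      mul_le_mul_of_nonneg_right (by linarith) hlogc.le
    rwa [hL_def, div_mul_cancel₀ _ hlogc.ne'] at h1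
  have hpowM : c^(M-1) ≤ a := by
    rwa [Real.log_le_log_iff (pow_pos hcpos _) hapos] at hlogle
  have hgM1 : g (M-1) ≤ (1-2*η)*r := by
    simp only [hg_def]
    have h1 : (1-lam/2) * c^(M-1) ≤ (1-lam/2) * a :=
      mul_le_mul_of_nonneg_left hpowM h1l2.le
    have h2 : (1-lam/2) * a = 1-2*η := by
      rw [ha_def, mul_comm, div_mul_cancel₀ _ h1l2.ne']
    nlinarith
  have hgM : g M ≤ (1-η)*r := by
    have hMsucc : M = (M-1)+1 := (Nat.succ_pred_eq_of_pos hM0).symm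
    have heq : g M = g (M-1) * c := by
      nth_rewrite 1 [hMsucc]
      exact hgstep _
    rw [heq]
    have h1 : g (M-1) * c ≤ (1-2*η)*r * c :=
      mul_le_mul_of_nonneg_right hgM1 hcpos.le
    have h2 : (1-2*η)*r*c ≤ (1-η)*r := by
      rw [hc_def, mul_one_div, div_le_iff₀ h1η]
      nlinarith [sq_nonneg η]
    linarith
  have hglow : ∀ j, (1-lam)*r ≤ g j := by
    intro j
    have h0 : g 0 = (1-lam/2)*r := by simp [hg_def]
    have h1 : (1-lam)*r ≤ (1-lam/2)*r := by nlinarith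
    exact h1.trans (h0 ▸ hgmono (Nat.zero_le j))
  set Abig := closedBall x ((1-η)*r) \ closedBall x ((1-lam)*r) with hAbig_def
  set A : ℕ → Set (EuclideanSpace ℝ (Fin n)) :=
    fun j => closedBall x (g (j+1)) \ closedBall x (g j) with hA_def
  have hAmeas : ∀ j, MeasurableSet (A j) :=
    fun j => measurableSet_closedBall.diff measurableSet_closedBall
  have hAsub : ∀ j, j < M → A j ⊆ Abig := by
    intro j hj y hy
    simp only [hA_def, Set.mem_diff, mem_closedBall] at hy
    simp only [hAbig_def, Set.mem_diff, mem_closedBall]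
    exact ⟨hy.1.trans ((hgmono hj).trans hgM), fun hmem => hy.2 (hmem.trans (hglow j))⟩
  have hkeydisj : ∀ i j : ℕ, i < j → Disjoint (A i) (A j) := by
    intro i j hij
    rw [Set.disjoint_left]
    intro y hyi hyj
    simp only [hA_def, Set.mem_diff, mem_closedBall] at hyi hyj
    exact hyj.2 (hyi.1.trans (hgmono hij))
  have hpd : ∀ (F : Finset ℕ), (↑F : Set ℕ).PairwiseDisjoint A := by
    intro F i _ j _ hij
    rcases lt_or_gt_of_ne hij with h | h
    · exact hkeydisj i j h
    · exact (hkeydisj j i h).symm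
  set F0 := (Finset.range M).filter
    (fun j => (3/(M:ℝ≥0∞)) * μ Abig < μ (A j)) with hF0_def
  set F1 := (Finset.range M).filter
    (fun j => (3/(M:ℝ≥0∞)) * (μ.restrict E₁) Abig < (μ.restrict E₁) (A j)) with hF1_def
  set F2 := (Finset.range M).filter
    (fun j => (3/(M:ℝ≥0∞)) * (μ.restrict E₂) Abig < (μ.restrict E₂) (A j)) with hF2_def
  have hcard0 : 3 * F0.card < M :=
    aux_card14 μ A Abig M hM0 F0 (fun j _ => hAmeas j)
      (fun j hj => hAsub j (Finset.mem_range.mp (Finset.mem_filter.mp hj).1))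
      (hpd F0) (fun j hj => (Finset.mem_filter.mp hj).2)
  have hcard1 : 3 * F1.card < M :=
    aux_card14 (μ.restrict E₁) A Abig M hM0 F1 (fun j _ => hAmeas j)
      (fun j hj => hAsub j (Finset.mem_range.mp (Finset.mem_filter.mp hj).1))
      (hpd F1) (fun j hj => (Finset.mem_filter.mp hj).2)
  have hcard2 : 3 * F2.card < M :=
    aux_card14 (μ.restrict E₂) A Abig M hM0 F2 (fun j _ => hAmeas j)
      (fun j hj => hAsub j (Finset.mem_range.mp (Finset.mem_filter.mp hj).1))
      (hpd F2) (fun j hj => (Finset.mem_filter.mp hj).2)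
  have hunion : ¬ (Finset.range M ⊆ F0 ∪ F1 ∪ F2) := by
    intro h
    have h1 := Finset.card_le_card h
    rw [Finset.card_range] at h1
    have h2 := Finset.card_union_le (F0 ∪ F1) F2
    have h3 := Finset.card_union_le F0 F1
    omega
  obtain ⟨j, hjr, hjn⟩ := Finset.not_subset.mp hunion
  simp only [Finset.mem_union, not_or] at hjn
  obtain ⟨⟨hj0, hj1⟩, hj2⟩ := hjn
  have hjM : j < M := Finset.mem_range.mp hjr
  have hg1 : μ (A j) ≤ 3/(M:ℝ≥0∞) * μ Abig := by
    by_contra h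
    exact hj0 (Finset.mem_filter.mpr ⟨hjr, not_le.mp h⟩)
  have hg2 : (μ.restrict E₁) (A j) ≤ 3/(M:ℝ≥0∞) * (μ.restrict E₁) Abig := by
    by_contra h
    exact hj1 (Finset.mem_filter.mpr ⟨hjr, not_le.mp h⟩)
  have hg3 : (μ.restrict E₂) (A j) ≤ 3/(M:ℝ≥0∞) * (μ.restrict E₂) Abig := by
    by_contra h
    exact hj2 (Finset.mem_filter.mpr ⟨hjr, not_le.mp h⟩)
  have e1 : ∀ s, μ (E₁ ∩ s) = μ.restrict E₁ s := fun s => by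
    rw [Measure.restrict_apply' hE₁, Set.inter_comm]
  have e2 : ∀ s, μ (E₂ ∩ s) = μ.restrict E₂ s := fun s => by
    rw [Measure.restrict_apply' hE₂, Set.inter_comm]
  refine ⟨g j, ?_, ?_, ?_, ?_, ?_⟩
  · have h0 : g 0 = (1-lam/2)*r := by simp [hg_def]
    exact h0 ▸ hgmono (Nat.zero_le j)
  · exact (hgmono (by omega : j ≤ M-1)).trans hgM1
  · rw [hgdiv j]
    exact hg1
  · rw [hgdiv j, e1, e1]
    exact hg2
  · rw [hgdiv j, e2, e2]
    exact hg3
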